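/- Let q₀(σ) = 4·arctan(e^σ) and let a₁, a₂, φ, s be real numbers and I ∈ ℝ with I ≠ 0 and I ≠ 1. Then the Melnikov potential integral ∫_{−∞}^{+∞} (cos(q₀(σ)) − 1)·(a₁cos(φ + Iσ) + a₂cos(φ − s + (I−1)σ)) dσ converges and equals −(2πI a₁/sinh(πI/2))·cos φ − (2π(I−1)a₂/sinh(π(I−1)/2))·cos(φ − s). In particular, the Melnikov potential has the two-harmonic form A₁(I)cos φ + A₂(I)cos(φ−s), with coefficients A₁(I) = 2πI a₁/sinh(πI/2) and A₂(I) = 2π(I−1)a₂/sinh(π(I−1)/2) up to a global sign. -/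

import Mathlib

open Real MeasureTheory Set Filter Asymptotics

lemma sech_formula (σ : ℝ) :
    Real.cos (4 * Real.arctan (Real.exp σ)) - 1 = -2 * (1 / Real.cosh σ ^ 2) := by
  have h4 : (4:ℝ) * Real.arctan (Real.exp σ) = 2 * (2 * Real.arctan (Real.exp σ)) := by ring
  have hx : (0:ℝ) < 1 + Real.exp σ ^ 2 := by positivity
  have hc2 : Real.cos (Real.arctan (Real.exp σ)) ^ 2 = 1 / (1 + Real.exp σ ^ 2) := by
    rw [Real.cos_arctan, div_pow, one_pow, Real.sq_sqrt hx.le]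
  rw [h4, Real.cos_two_mul, Real.cos_two_mul, hc2, Real.cosh_eq, Real.exp_neg]
  have he : Real.exp σ ≠ 0 := (Real.exp_pos σ).ne'
  field_simp
  ring

lemma cosh_ge_half_exp (x : ℝ) : Real.exp x / 2 ≤ Real.cosh x := by
  rw [Real.cosh_eq]
  have := (Real.exp_pos (-x)).le
  linarith

lemma cosh_ge_half_exp_neg (x : ℝ) : Real.exp (-x) / 2 ≤ Real.cosh x := by
  rw [Real.cosh_eq]
  have := (Real.exp_pos x).le
  linarith

lemma integrable_sech2 : MeasureTheory.Integrable (fun x : ℝ => 1 / Real.cosh x ^ 2) := by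
  have hcont : Continuous (fun x : ℝ => 1 / Real.cosh x ^ 2) := by
    refine Continuous.div continuous_const (Real.continuous_cosh.pow 2) ?_
    intro x; positivity
  refine hcont.locallyIntegrable.integrable_of_isBigO_atBot_atTop
    (g := fun x => Real.exp x) ?_ ?_ (g' := fun x => Real.exp (-2 * x)) ?_ ?_
  · refine IsBigO.of_bound 4 ?_
    filter_upwards [Filter.eventually_le_atBot 0] with x hx
    have h1 : Real.exp (-x) / 2 ≤ Real.cosh x := cosh_ge_half_exp_neg x
    have h2 : (Real.exp (-x) / 2) ^ 2 ≤ Real.cosh x ^ 2 := by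
      have := (Real.exp_pos (-x)).le
      nlinarith [Real.cosh_pos x]
    have hc : (0:ℝ) < Real.cosh x ^ 2 := by positivity
    rw [Real.norm_eq_abs, Real.norm_eq_abs, abs_of_nonneg (by positivity),
      abs_of_nonneg (Real.exp_pos x).le]
    rw [div_le_iff₀ hc]
    have h3 : (1:ℝ) ≤ Real.exp (-x) := Real.one_le_exp (by linarith)
    have h4 : Real.exp x * Real.exp (-x) = 1 := by
      rw [← Real.exp_add]; simp
    nlinarith [Real.exp_pos x, Real.exp_pos (-x)]
  · exact ⟨Iic 0, Iic_mem_atBot 0, integrableOn_exp_Iic 0⟩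
  · refine IsBigO.of_bound 4 ?_
    filter_upwards with x
    have h1 : Real.exp x / 2 ≤ Real.cosh x := cosh_ge_half_exp x
    have hc : (0:ℝ) < Real.cosh x ^ 2 := by positivity
    rw [Real.norm_eq_abs, Real.norm_eq_abs, abs_of_nonneg (by positivity),
      abs_of_nonneg (Real.exp_pos _).le]
    rw [div_le_iff₀ hc]
    have h4 : Real.exp (-2*x) * Real.exp x ^ 2 = 1 := by
      rw [sq, ← Real.exp_add, ← Real.exp_add, show -2*x+(x+x) = 0 by ring, Real.exp_zero]
    have h2 : (Real.exp x / 2) ^ 2 ≤ Real.cosh x ^ 2 := by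
      nlinarith [Real.cosh_pos x, Real.exp_pos x]
    nlinarith [Real.exp_pos (-2*x)]
  · exact ⟨Ioi 0, Ioi_mem_atTop 0, exp_neg_integrableOn_Ioi 0 (by norm_num)⟩

lemma cpow_pos_real {p : ℝ} (hp : 0 < p) (c : ℂ) :
    (p:ℂ) ^ c = Complex.exp ((Real.log p : ℂ) * c) := by
  rw [Complex.cpow_def_of_ne_zero (by exact_mod_cast hp.ne'), Complex.ofReal_log hp.le]

lemma beta_step (b : ℝ) :
    ∫ t in Ioi (0:ℝ), (t:ℂ) ^ ((b/2 : ℂ) * Complex.I) / ((1:ℂ) + (t:ℂ)) ^ 2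
      = Complex.betaIntegral (1 + (b/2)*Complex.I) (1 - (b/2)*Complex.I) := by
  set z : ℂ := (b/2 : ℂ) * Complex.I with hz
  set g : ℝ → ℂ := fun t => (t:ℂ) ^ z / ((1:ℂ) + (t:ℂ)) ^ 2 with hg
  have himg : (fun u : ℝ => u / (1 - u)) '' Ioo 0 1 = Ioi 0 := by
    ext t
    constructor
    · rintro ⟨u, ⟨h0, h1⟩, rfl⟩
      exact div_pos h0 (by linarith)
    · intro ht
      have ht' : (0:ℝ) < t := ht
      refine ⟨t / (1 + t), ⟨by positivity, ?_⟩, ?_⟩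
      · rw [div_lt_one (by linarith)]; linarith
      · field_simp; ring
  have hderiv : ∀ u ∈ Ioo (0:ℝ) 1, HasDerivWithinAt (fun u : ℝ => u / (1 - u))
      (1 / (1 - u) ^ 2) (Ioo 0 1) u := by
    intro u hu
    have h1u : (1:ℝ) - u ≠ 0 := by have := hu.2; intro h; linarith [hu.2]
    have hd : HasDerivAt (fun u : ℝ => u / (1 - u))
        ((1 * (1 - u) - u * (0 - 1)) / (1 - u) ^ 2) u :=
      (hasDerivAt_id u).div ((hasDerivAt_const u 1).sub (hasDerivAt_id u)) h1u
    have : (1 * (1 - u) - u * (0 - 1)) / (1 - u) ^ 2 = 1 / (1 - u) ^ 2 := by ring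
    rw [this] at hd
    exact hd.hasDerivWithinAt
  have hinj : InjOn (fun u : ℝ => u / (1 - u)) (Ioo 0 1) := by
    intro u hu v hv h
    have h1u : (1:ℝ) - u ≠ 0 := by intro hh; linarith [hu.2]
    have h1v : (1:ℝ) - v ≠ 0 := by intro hh; linarith [hv.2]
    field_simp at h
    linarith
  have key := MeasureTheory.integral_image_eq_integral_abs_deriv_smul
    measurableSet_Ioo hderiv hinj g
  rw [himg] at key
  rw [key]
  have hcong : ∀ u ∈ Ioo (0:ℝ) 1,
      |1 / (1 - u) ^ 2| • g (u / (1 - u)) = (u:ℂ) ^ z * ((1-u:ℝ):ℂ) ^ (-z) := by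
    intro u hu
    obtain ⟨hu0, hu1⟩ := hu
    have h1u : (0:ℝ) < 1 - u := by linarith
    have hq : (0:ℝ) < u / (1 - u) := div_pos hu0 h1u
    have habs : |1 / (1 - u) ^ 2| = 1 / (1 - u) ^ 2 := abs_of_pos (by positivity)
    have hcp : ((u / (1 - u) : ℝ) : ℂ) ^ z = (u:ℂ) ^ z * ((1-u:ℝ):ℂ) ^ (-z) := by
      rw [cpow_pos_real hq, cpow_pos_real hu0, cpow_pos_real h1u,
        Real.log_div hu0.ne' h1u.ne', ← Complex.exp_add]
      push_cast
      ring_nf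
    have hden : (1:ℂ) + ((u / (1 - u) : ℝ) : ℂ) = ((1-u:ℝ):ℂ)⁻¹ := by
      have h : (1:ℝ) + u / (1 - u) = (1 - u)⁻¹ := by field_simp; ring
      exact_mod_cast congrArg Complex.ofReal h
    have h1unz : ((1-u:ℝ):ℂ) ≠ 0 := by exact_mod_cast h1u.ne'
    have e1 : g (u / (1 - u)) = ((u / (1 - u) : ℝ) : ℂ) ^ z / (1 + ((u / (1 - u) : ℝ) : ℂ)) ^ 2 :=
      rfl
    rw [e1, hcp, hden, habs, Complex.real_smul]
    have hp2 : (((1-u:ℝ):ℂ)) ^ 2 ≠ 0 := pow_ne_zero _ h1unz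
    rw [inv_pow, div_eq_mul_inv ((u:ℂ) ^ z * ((1-u:ℝ):ℂ) ^ (-z)) ((((1-u:ℝ):ℂ)) ^ 2)⁻¹,
      inv_inv, Complex.ofReal_div, Complex.ofReal_one, Complex.ofReal_pow]
    rw [mul_comm, one_div, mul_assoc, mul_inv_cancel₀ hp2, mul_one]
  rw [MeasureTheory.setIntegral_congr_fun measurableSet_Ioo hcong]
  rw [Complex.betaIntegral, intervalIntegral.integral_of_le zero_le_one,
    MeasureTheory.integral_Ioc_eq_integral_Ioo]
  refine MeasureTheory.setIntegral_congr_fun measurableSet_Ioo ?_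
  intro u hu
  have : (1:ℂ) + (b/2)*Complex.I - 1 = z := by rw [hz]; ring
  rw [this]
  have h2 : (1:ℂ) - (b/2)*Complex.I - 1 = -z := by rw [hz]; ring
  rw [h2]
  push_cast
  ring_nf

lemma Gamma_eval (b : ℝ) (hb : b ≠ 0) :
    Complex.betaIntegral (1 + (b/2:ℂ)*Complex.I) (1 - (b/2:ℂ)*Complex.I)
      = ((π * b / (2 * Real.sinh (π * b / 2)) : ℝ) : ℂ) := by
  set z : ℂ := (b/2:ℂ) * Complex.I with hzdef
  have hbz : (b:ℂ) ≠ 0 := by exact_mod_cast hb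
  have hz0 : z ≠ 0 := by
    simp only [hzdef]
    exact mul_ne_zero (div_ne_zero hbz two_ne_zero) Complex.I_ne_zero
  have hu : 0 < (1 + z).re := by simp [hzdef]
  have hv : 0 < (1 - z).re := by simp [hzdef]
  have hbeta := Complex.Gamma_mul_Gamma_eq_betaIntegral hu hv
  have hsum : (1 + z) + (1 - z) = 2 := by ring
  rw [hsum] at hbeta
  have hG2 : Complex.Gamma 2 = 1 := by
    simpa using Complex.Gamma_nat_eq_factorial 1
  rw [hG2, one_mul] at hbeta
  rw [← hbeta]
  have hG1 : Complex.Gamma (1 + z) = z * Complex.Gamma z := by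
    rw [add_comm, Complex.Gamma_add_one z hz0]
  rw [hG1, mul_assoc, Complex.Gamma_mul_Gamma_one_sub]
  have hsin : Complex.sin (↑π * z) = (Real.sinh (π * b / 2) : ℂ) * Complex.I := by
    have h1 : (↑π : ℂ) * z = ((π * b / 2 : ℝ) : ℂ) * Complex.I := by
      rw [hzdef]; push_cast; ring
    rw [h1, Complex.sin_mul_I, Complex.ofReal_sinh]
  rw [hsin]
  have hS : ((Real.sinh (π * b / 2) : ℝ) : ℂ) ≠ 0 := by
    have : Real.sinh (π * b / 2) ≠ 0 := by
      rw [Ne, Real.sinh_eq_zero]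
      intro h
      have h2 : π * b = 0 := by linarith
      rcases mul_eq_zero.mp h2 with h3 | h3
      · exact Real.pi_ne_zero h3
      · exact hb h3
    exact_mod_cast this
  rw [div_mul_eq_div_div, Complex.div_I, hzdef]
  push_cast
  field_simp
  ring_nf
  rw [Complex.I_sq]
  ring


lemma cosh_sub_int (b : ℝ) :
    ∫ t in Ioi (0:ℝ), (t:ℂ) ^ ((b/2:ℂ) * Complex.I) / ((1:ℂ) + (t:ℂ)) ^ 2
      = (2⁻¹ : ℝ) • ∫ x : ℝ, ((1 / Real.cosh x ^ 2 : ℝ) : ℂ) *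
          Complex.exp (((b * x : ℝ) : ℂ) * Complex.I) := by
  set z : ℂ := (b/2:ℂ) * Complex.I with hzdef
  set g : ℝ → ℂ := fun t => (t:ℂ) ^ z / ((1:ℂ) + (t:ℂ)) ^ 2 with hg
  have himg : (fun x : ℝ => Real.exp (2 * x)) '' univ = Ioi 0 := by
    rw [image_univ]
    ext t
    constructor
    · rintro ⟨x, rfl⟩; exact Real.exp_pos _
    · intro ht
      refine ⟨Real.log t / 2, ?_⟩
      show Real.exp (2 * (Real.log t / 2)) = t
      rw [show 2 * (Real.log t / 2) = Real.log t by ring, Real.exp_log ht]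
  have hderiv : ∀ x ∈ (univ : Set ℝ), HasDerivWithinAt (fun x : ℝ => Real.exp (2 * x))
      (2 * Real.exp (2 * x)) univ x := by
    intro x _
    have h : HasDerivAt (fun y : ℝ => Real.exp (2 * y)) (Real.exp (2 * x) * 2) x := by
      simpa using ((hasDerivAt_id x).const_mul (2:ℝ)).exp
    rw [mul_comm] at h
    exact h.hasDerivWithinAt
  have hinj : InjOn (fun x : ℝ => Real.exp (2 * x)) univ := by
    intro x _ y _ h
    have := Real.exp_injective h
    linarith
  have key := MeasureTheory.integral_image_eq_integral_abs_deriv_smul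
    MeasurableSet.univ hderiv hinj g
  rw [himg, Measure.restrict_univ] at key
  rw [key]
  rw [← MeasureTheory.integral_smul]
  congr 1
  ext x
  have hex : (0:ℝ) < Real.exp (2 * x) := Real.exp_pos _
  have habs : |2 * Real.exp (2 * x)| = 2 * Real.exp (2 * x) := abs_of_pos (by positivity)
  have hcp : ((Real.exp (2 * x) : ℝ) : ℂ) ^ z = Complex.exp (((b * x : ℝ) : ℂ) * Complex.I) := by
    rw [cpow_pos_real hex, Real.log_exp, hzdef]
    congr 1
    push_cast
    ring
  have hsech : (1 / Real.cosh x ^ 2 : ℝ)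
      = 4 * Real.exp (2 * x) / (1 + Real.exp (2 * x)) ^ 2 := by
    rw [Real.cosh_eq, Real.exp_neg]
    have he : Real.exp x ≠ 0 := (Real.exp_pos x).ne'
    have h2 : Real.exp (2 * x) = Real.exp x ^ 2 := by
      rw [sq, ← Real.exp_add]; ring_nf
    rw [h2]
    field_simp
    ring
  have e1 : g (Real.exp (2 * x)) = ((Real.exp (2*x) : ℝ) : ℂ) ^ z
      / ((1:ℂ) + ((Real.exp (2*x) : ℝ):ℂ)) ^ 2 := rfl
  rw [habs, e1, hcp]
  have hden : ((1:ℂ) + ((Real.exp (2*x) : ℝ):ℂ)) ≠ 0 := by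
    have : (0:ℝ) < 1 + Real.exp (2*x) := by positivity
    exact_mod_cast (by exact_mod_cast this.ne' : ((1 + Real.exp (2*x) : ℝ):ℂ) ≠ 0)
  rw [hsech]
  simp only [Complex.real_smul]
  push_cast
  set E := Complex.exp (((b * x : ℝ) : ℂ) * Complex.I) with hE
  have hden' : ((1:ℂ) + Complex.exp (2*x)) ≠ 0 := by
    have h : (0:ℝ) < 1 + Real.exp (2*x) := by positivity
    have h2 : ((1 + Real.exp (2*x) : ℝ) : ℂ) ≠ 0 := by exact_mod_cast h.ne'
    push_cast at h2
    exact h2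
  field_simp
  ring







lemma F_integrable (c b : ℝ) : MeasureTheory.Integrable (fun x : ℝ =>
    ((1 / Real.cosh x ^ 2 : ℝ) : ℂ) * Complex.exp (((c + b * x : ℝ) : ℂ) * Complex.I)) := by
  have hcosh : ∀ x : ℝ, Real.cosh x ≠ 0 := fun x => (Real.cosh_pos x).ne'
  have hcont : Continuous (fun x : ℝ =>
      ((1 / Real.cosh x ^ 2 : ℝ) : ℂ) * Complex.exp (((c + b * x : ℝ) : ℂ) * Complex.I)) := by
    apply Continuous.mul
    · exact Complex.continuous_ofReal.comp
        (continuous_const.div (Real.continuous_cosh.pow 2) (fun x => by positivity))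
    · exact Complex.continuous_exp.comp
        ((Complex.continuous_ofReal.comp (by continuity)).mul continuous_const)
  refine integrable_sech2.mono' hcont.aestronglyMeasurable (Filter.Eventually.of_forall ?_)
  intro x
  rw [norm_mul, Complex.norm_exp_ofReal_mul_I, mul_one, Complex.norm_real, Real.norm_eq_abs,
    abs_of_nonneg (by positivity)]

lemma sech2_complex (b : ℝ) (hb : b ≠ 0) :
    ∫ x : ℝ, ((1 / Real.cosh x ^ 2 : ℝ) : ℂ) * Complex.exp (((b * x : ℝ) : ℂ) * Complex.I)
      = ((π * b / Real.sinh (π * b / 2) : ℝ) : ℂ) := by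
  have h := cosh_sub_int b
  rw [beta_step b, Gamma_eval b hb] at h
  have hS : Real.sinh (π * b / 2) ≠ 0 := by
    rw [Ne, Real.sinh_eq_zero]
    intro hh
    have h2 : π * b = 0 := by linarith
    rcases mul_eq_zero.mp h2 with h3 | h3
    · exact Real.pi_ne_zero h3
    · exact hb h3
  have hr : 2 * (π * b / (2 * Real.sinh (π * b / 2))) = π * b / Real.sinh (π * b / 2) := by
    field_simp
  calc ∫ x : ℝ, ((1 / Real.cosh x ^ 2 : ℝ) : ℂ) * Complex.exp (((b * x : ℝ) : ℂ) * Complex.I)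
      = (2:ℝ) • ((2⁻¹:ℝ) • ∫ x : ℝ, ((1 / Real.cosh x ^ 2 : ℝ) : ℂ) *
          Complex.exp (((b * x : ℝ) : ℂ) * Complex.I)) := by
        rw [smul_smul]; norm_num
    _ = (2:ℝ) • ((π * b / (2 * Real.sinh (π * b / 2)) : ℝ) : ℂ) := by rw [← h]
    _ = ((π * b / Real.sinh (π * b / 2) : ℝ) : ℂ) := by
        rw [Complex.real_smul]
        exact_mod_cast congrArg Complex.ofReal hr

lemma sech2_cos_integral (b : ℝ) (hb : b ≠ 0) (c : ℝ) :
    ∫ x : ℝ, (1 / Real.cosh x ^ 2) * Real.cos (c + b * x)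
      = (π * b / Real.sinh (π * b / 2)) * Real.cos c := by
  set K : ℝ := π * b / Real.sinh (π * b / 2) with hK
  set F : ℝ → ℂ := fun x =>
    ((1 / Real.cosh x ^ 2 : ℝ) : ℂ) * Complex.exp (((c + b * x : ℝ) : ℂ) * Complex.I) with hF
  have hFint : MeasureTheory.Integrable F := F_integrable c b
  have hre : ∀ x : ℝ, (1 / Real.cosh x ^ 2) * Real.cos (c + b * x) = (F x).re := by
    intro x
    rw [hF]
    show _ = (((1 / Real.cosh x ^ 2 : ℝ) : ℂ) * Complex.exp (((c + b * x : ℝ) : ℂ) * Complex.I)).re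
    rw [Complex.re_ofReal_mul, Complex.exp_ofReal_mul_I_re]
  have hInt : ∫ x : ℝ, (1 / Real.cosh x ^ 2) * Real.cos (c + b * x) = (∫ x : ℝ, F x).re := by
    have h := integral_re (𝕜 := ℂ) hFint
    simp only [RCLike.re_to_complex] at h
    rw [← h]
    simp_rw [hre]
  have hsplit : ∀ x : ℝ, F x = Complex.exp ((c:ℂ) * Complex.I) *
      (((1 / Real.cosh x ^ 2 : ℝ) : ℂ) * Complex.exp (((b * x : ℝ) : ℂ) * Complex.I)) := by
    intro x
    simp only [hF]
    have heq : ((c + b * x : ℝ) : ℂ) * Complex.I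
        = (c:ℂ) * Complex.I + ((b * x : ℝ):ℂ) * Complex.I := by
      push_cast; ring
    rw [heq, Complex.exp_add]
    ring
  have hIF : ∫ x : ℝ, F x = Complex.exp ((c:ℂ) * Complex.I) * ((K : ℝ) : ℂ) := by
    simp_rw [hsplit]
    rw [MeasureTheory.integral_const_mul, sech2_complex b hb]
  rw [hInt, hIF]
  simp [Complex.mul_re, Complex.exp_ofReal_mul_I_re, Complex.exp_ofReal_mul_I_im]
  ring




lemma sech2_cos_integrable (c b : ℝ) :
    MeasureTheory.Integrable (fun x : ℝ => (1 / Real.cosh x ^ 2) * Real.cos (c + b * x)) := by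
  have hcont : Continuous (fun x : ℝ => (1 / Real.cosh x ^ 2) * Real.cos (c + b * x)) := by
    apply Continuous.mul
    · exact continuous_const.div (Real.continuous_cosh.pow 2) (fun x => by positivity)
    · exact Real.continuous_cos.comp (by continuity)
  refine integrable_sech2.mono' hcont.aestronglyMeasurable (Filter.Eventually.of_forall ?_)
  intro x
  rw [Real.norm_eq_abs, abs_mul, abs_of_nonneg (by positivity : (0:ℝ) ≤ 1 / Real.cosh x ^ 2)]
  have h1 : |Real.cos (c + b * x)| ≤ 1 := Real.abs_cos_le_one _
  have h2 : (0:ℝ) ≤ 1 / Real.cosh x ^ 2 := by positivity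
  nlinarith

theorem melnikov_potential_two_harmonics (a₁ a₂ φ s I : ℝ) (hI0 : I ≠ 0) (hI1 : I ≠ 1) :
    MeasureTheory.Integrable (fun σ : ℝ =>
      (Real.cos (4 * Real.arctan (Real.exp σ)) - 1) *
        (a₁ * Real.cos (φ + I * σ) + a₂ * Real.cos (φ - s + (I - 1) * σ))) ∧
    ∫ σ : ℝ, (Real.cos (4 * Real.arctan (Real.exp σ)) - 1) *
        (a₁ * Real.cos (φ + I * σ) + a₂ * Real.cos (φ - s + (I - 1) * σ)) =
      -(2 * π * I * a₁ / Real.sinh (π * I / 2)) * Real.cos φ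
        - (2 * π * (I - 1) * a₂ / Real.sinh (π * (I - 1) / 2)) * Real.cos (φ - s) := by
  have hfun : (fun σ : ℝ =>
      (Real.cos (4 * Real.arctan (Real.exp σ)) - 1) *
        (a₁ * Real.cos (φ + I * σ) + a₂ * Real.cos (φ - s + (I - 1) * σ)))
      = fun σ : ℝ => (-2 * a₁) * ((1 / Real.cosh σ ^ 2) * Real.cos (φ + I * σ))
        + (-2 * a₂) * ((1 / Real.cosh σ ^ 2) * Real.cos (φ - s + (I - 1) * σ)) := by
    funext σ
    rw [sech_formula σ]
    ring
  have hint1 := (sech2_cos_integrable φ I).const_mul (-2 * a₁)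
  have hint2 := (sech2_cos_integrable (φ - s) (I - 1)).const_mul (-2 * a₂)
  constructor
  · rw [hfun]
    exact hint1.add hint2
  · rw [hfun, MeasureTheory.integral_add hint1 hint2,
      MeasureTheory.integral_const_mul, MeasureTheory.integral_const_mul,
      sech2_cos_integral I hI0 φ, sech2_cos_integral (I - 1) (sub_ne_zero.mpr hI1) (φ - s)]
    ring
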